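/- For X with standard logistic density and any t ∈ ℝ with t ≠ 0, E[e^{itX}] = πt/sinh(πt); for t = 0 the characteristic function equals 1. -/

import Mathlib

open MeasureTheory Complex Set Real

noncomputable def logisticF (x : ℝ) : ℝ := (1 + Real.exp (-x))⁻¹
noncomputable def logisticP (x : ℝ) : ℝ := Real.exp (-x) / (1 + Real.exp (-x))^2

lemma hpos (x : ℝ) : 0 < 1 + Real.exp (-x) := by positivity

lemma hderiv (x : ℝ) : HasDerivAt logisticF (logisticP x) x := by
  have h1 : HasDerivAt (fun x : ℝ => 1 + Real.exp (-x)) (-Real.exp (-x)) x := by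
    simpa using ((Real.hasDerivAt_exp (-x)).comp x (hasDerivAt_neg x)).const_add 1
  have := h1.inv (hpos x).ne'
  rw [show logisticF = (fun x : ℝ => 1 + Real.exp (-x))⁻¹ from rfl]
  simpa [logisticP, neg_div] using this

lemma hmono : StrictMono logisticF := by
  intro a b hab
  have : 1 + Real.exp (-b) < 1 + Real.exp (-a) := by
    have := Real.exp_lt_exp.2 (neg_lt_neg hab)
    linarith
  exact inv_strictAnti₀ (hpos b) this

lemma hrange : Set.range logisticF = Set.Ioo (0:ℝ) 1 := by
  ext y
  constructor
  · rintro ⟨x, rfl⟩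
    refine ⟨inv_pos.2 (hpos x), ?_⟩
    have h := Real.exp_pos (-x)
    have h1 : (1:ℝ) < 1 + Real.exp (-x) := by linarith
    calc logisticF x < 1⁻¹ := inv_strictAnti₀ one_pos h1
      _ = 1 := inv_one
  · rintro ⟨h0, h1⟩
    refine ⟨Real.log (y / (1 - y)), ?_⟩
    have hy1 : 0 < 1 - y := by linarith
    have : Real.exp (-Real.log (y / (1 - y))) = (1 - y) / y := by
      rw [← Real.log_inv, Real.exp_log (by positivity), inv_div]
    rw [logisticF, this]
    field_simp
    ring

lemma key (t : ℝ) :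
    ∫ x : ℝ, Complex.exp (Complex.I * t * x) *
        ((Real.exp (-x) / (1 + Real.exp (-x))^2 : ℝ) : ℂ) =
      Complex.betaIntegral (1 + Complex.I * t) (1 - Complex.I * t) := by
  set g : ℝ → ℂ := fun u => (u:ℂ)^(Complex.I * t) * ((1:ℂ) - u)^(-(Complex.I * t)) with hg
  have h := integral_image_eq_integral_abs_deriv_smul MeasurableSet.univ
    (fun x _ => (hderiv x).hasDerivWithinAt) (hmono.injective.injOn) g
  rw [Set.image_univ, hrange] at h
  have hRHS : ∫ x in Set.univ, |logisticP x| • g (logisticF x) =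
      ∫ x : ℝ, Complex.exp (Complex.I * t * x) *
        ((Real.exp (-x) / (1 + Real.exp (-x))^2 : ℝ) : ℂ) := by
    rw [setIntegral_univ]
    congr 1
    ext x
    have hp : 0 < logisticP x := by unfold logisticP; positivity
    have hfx : 0 < logisticF x := inv_pos.2 (hpos x)
    have hfx1 : logisticF x < 1 := by
      have := (hrange ▸ Set.mem_range_self x : logisticF x ∈ Set.Ioo (0:ℝ) 1)
      exact this.2
    have h1f : (1:ℂ) - (logisticF x : ℂ) = ((1 - logisticF x : ℝ) : ℂ) := by push_cast; ring
    have hlog : Real.log (logisticF x) - Real.log (1 - logisticF x) = x := by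
      rw [← Real.log_div hfx.ne' (by linarith)]
      have : logisticF x / (1 - logisticF x) = Real.exp x := by
        unfold logisticF
        have he := (hpos x).ne'
        have hA : 1 - (1 + Real.exp (-x))⁻¹ = Real.exp (-x) / (1 + Real.exp (-x)) := by
          field_simp
          ring
        rw [hA]
        have hB : (1 + Real.exp (-x))⁻¹ / (Real.exp (-x) / (1 + Real.exp (-x)))
            = (Real.exp (-x))⁻¹ := by
          field_simp
        rw [hB, Real.exp_neg, inv_inv]
      rw [this, Real.log_exp]
    have hc1 : (logisticF x : ℂ) ^ (Complex.I * t) =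
        Complex.exp ((Real.log (logisticF x) : ℂ) * (Complex.I * t)) := by
      rw [Complex.cpow_def_of_ne_zero (by exact_mod_cast hfx.ne'),
        Complex.ofReal_log hfx.le]
    have hc2 : ((1:ℂ) - (logisticF x : ℂ)) ^ (-(Complex.I * t)) =
        Complex.exp ((Real.log (1 - logisticF x) : ℂ) * (-(Complex.I * t))) := by
      rw [h1f, Complex.cpow_def_of_ne_zero (by exact_mod_cast (by linarith : (0:ℝ) < 1 - logisticF x).ne'),
        Complex.ofReal_log (by linarith)]
    rw [abs_of_pos hp, Complex.real_smul, hg]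
    simp only [hc1, hc2, ← Complex.exp_add]
    rw [show ((Real.log (logisticF x) : ℂ) * (Complex.I * t) +
        (Real.log (1 - logisticF x) : ℂ) * (-(Complex.I * t)))
      = Complex.I * t * ((Real.log (logisticF x) - Real.log (1 - logisticF x) : ℝ) : ℂ) by
        push_cast; ring, hlog]
    unfold logisticP
    push_cast
    ring
  rw [hRHS] at h
  rw [← h, Complex.betaIntegral,
    intervalIntegral.integral_of_le zero_le_one, ← integral_Ioc_eq_integral_Ioo]
  congr 1
  ext u
  rw [hg]
  ring_nf

lemma beta_eval (t : ℝ) (ht : t ≠ 0) :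
    Complex.betaIntegral (1 + Complex.I * t) (1 - Complex.I * t) =
      ((Real.pi * t / Real.sinh (Real.pi * t) : ℝ) : ℂ) := by
  have hit : Complex.I * t ≠ 0 := mul_ne_zero Complex.I_ne_zero (by exact_mod_cast ht)
  have h1 : (0:ℝ) < (1 + Complex.I * t).re := by simp
  have h2 : (0:ℝ) < (1 - Complex.I * t).re := by simp
  have hb := Complex.Gamma_mul_Gamma_eq_betaIntegral h1 h2
  have hsum : (1 + Complex.I * t) + (1 - Complex.I * t) = 2 := by ring
  rw [hsum] at hb
  have hG2 : Complex.Gamma 2 = 1 := by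
    rw [show (2:ℂ) = 1 + 1 by norm_num, Complex.Gamma_add_one 1 one_ne_zero,
      Complex.Gamma_one, mul_one]
  rw [hG2, one_mul] at hb
  rw [← hb]
  have hGa : Complex.Gamma (1 + Complex.I * t) = Complex.I * t * Complex.Gamma (Complex.I * t) := by
    rw [add_comm, Complex.Gamma_add_one _ hit]
  rw [hGa, mul_assoc, Complex.Gamma_mul_Gamma_one_sub]
  have hsin : Complex.sin (Real.pi * (Complex.I * t)) =
      (Real.sinh (Real.pi * t) : ℂ) * Complex.I := by
    rw [show (Real.pi : ℂ) * (Complex.I * t) = ((Real.pi * t : ℝ) : ℂ) * Complex.I by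
      push_cast; ring, Complex.sin_mul_I, Complex.ofReal_sinh]
  rw [hsin]
  have hs : Real.sinh (Real.pi * t) ≠ 0 :=
    Real.sinh_ne_zero.2 (mul_ne_zero Real.pi_ne_zero ht)
  have hs' : (Real.sinh (Real.pi * t) : ℂ) ≠ 0 := by exact_mod_cast hs
  rw [Complex.ofReal_div, Complex.ofReal_mul,
    show Complex.I * (t:ℂ) * (((Real.pi:ℂ)) / ((Real.sinh (Real.pi * t) : ℂ) * Complex.I)) =
      (Complex.I * ((t:ℂ) * (Real.pi:ℂ))) / ((Real.sinh (Real.pi * t) : ℂ) * Complex.I) from by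
        ring,
    div_eq_div_iff (mul_ne_zero hs' Complex.I_ne_zero) hs']
  ring

theorem logistic_char_function (t : ℝ) :
    (t ≠ 0 →
      ∫ x : ℝ, Complex.exp (Complex.I * t * x) *
          ((Real.exp (-x) / (1 + Real.exp (-x))^2 : ℝ) : ℂ) =
        (Real.pi * t / Real.sinh (Real.pi * t) : ℝ)) ∧
    (t = 0 →
      ∫ x : ℝ, Complex.exp (Complex.I * t * x) *
          ((Real.exp (-x) / (1 + Real.exp (-x))^2 : ℝ) : ℂ) = 1) := by
  constructor
  · intro ht
    rw [key t, beta_eval t ht]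
  · intro ht
    subst ht
    rw [key 0]
    have h1 : (0:ℝ) < ((1:ℂ)).re := by simp
    have hb := Complex.Gamma_mul_Gamma_eq_betaIntegral h1 h1
    simp only [Complex.ofReal_zero, mul_zero, add_zero, sub_zero]
    rw [show (1:ℂ) + 1 = 2 by norm_num, Complex.Gamma_one, one_mul,
      show Complex.Gamma 2 = 1 by
        rw [show (2:ℂ) = 1 + 1 by norm_num, Complex.Gamma_add_one 1 one_ne_zero,
          Complex.Gamma_one, mul_one], one_mul] at hb
    exact hb.symm
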